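/- Let n ≥ 2 and let p be a monic polynomial of degree n with p(0) = 0, p'(0) ≠ 0, whose nonzero roots all lie on the unit circle. If equality min over critical points ζ of |p(ζ)/(ζ p'(0))| = (n-1)/n holds, then p(z) = z(zⁿ⁻¹ - c) for some c with |c| = 1 — i.e., p(z) = a₁ z + zⁿ up to the normalization (the extremal polynomials are exactly p(z) = a₁ z + aₙ zⁿ). -/

import Mathlib

open Polynomial
open Finset
open scoped ComplexOrder
open Polynomial Finset
open scoped ComplexOrder

lemma norm_ms_prod (s : Multiset ℂ) : ‖s.prod‖ = (s.map fun x => ‖x‖).prod :=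
  map_multiset_prod normHom s

-- gram lemma
lemma gram_step {m : ℕ} (hm : 0 < m) (z : Fin m → ℂ) (hz : ∀ i, ‖z i‖ = 1)
    (hdet : ((m:ℝ))^m ≤ ‖(Matrix.vandermonde z).det‖^2) :
    ∀ i j, z i ^ m = z j ^ m := by
  classical
  set V := Matrix.vandermonde z with hV
  set G := V * V.conjTranspose with hGdef
  have hpsd : G.PosSemidef := Matrix.posSemidef_self_mul_conjTranspose V
  have hherm := hpsd.isHermitian
  have Gentry : ∀ i j, G i j = ∑ t : Fin m, (z i * (starRingEnd ℂ) (z j))^(t:ℕ) := by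
    intro i j
    simp only [hGdef, Matrix.mul_apply, Matrix.conjTranspose_apply, Matrix.vandermonde_apply]
    exact Finset.sum_congr rfl fun t _ => by
      simp [hV, Matrix.vandermonde_apply, mul_pow, star_pow, Complex.star_def]
  have hzz : ∀ i, z i * (starRingEnd ℂ) (z i) = 1 := by
    intro i
    rw [Complex.mul_conj, ← Complex.sq_norm, hz i]
    norm_num
  have hdiag : ∀ i, G i i = (m:ℂ) := by
    intro i
    rw [Gentry, ]
    simp [hzz]
  have htrace : G.trace = (m:ℂ)^2 := by
    rw [Matrix.trace]
    simp [Matrix.diag, hdiag, sq]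
  have hdetG : G.det = ((‖V.det‖ ^ 2 : ℝ) : ℂ) := by
    rw [hGdef, Matrix.det_mul, Matrix.det_conjTranspose]
    rw [show star V.det = (starRingEnd ℂ) V.det from rfl, Complex.mul_conj, Complex.sq_norm]
  set lam := hherm.eigenvalues with hlam
  have hnonneg : ∀ i, 0 ≤ lam i := hpsd.eigenvalues_nonneg
  have hprod : ∏ i, lam i = ‖V.det‖ ^ 2 := by
    have h1 := hherm.det_eq_prod_eigenvalues
    rw [hdetG] at h1
    have : ((‖V.det‖ ^ 2 : ℝ) : ℂ) = ((∏ i, lam i : ℝ) : ℂ) := by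
      rw [h1]; push_cast; rfl
    exact (Complex.ofReal_inj.mp this).symm
  have hsum : ∑ i, lam i = (m:ℝ)^2 := by
    have hU := (Matrix.mem_unitaryGroup_iff').mp (hherm.eigenvectorUnitary).2
    have h2 : G.trace = ((∑ i, lam i : ℝ) : ℂ) := by
      conv_lhs => rw [hherm.spectral_theorem]
      rw [Unitary.conjStarAlgAut_apply, Matrix.trace_mul_comm, ← mul_assoc, hU, one_mul, Matrix.trace_diagonal]
      push_cast; rfl
    rw [htrace] at h2
    have h2' : (((∑ i, lam i : ℝ)) : ℂ) = (((m:ℝ)^2 : ℝ) : ℂ) := by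
      rw [← h2]; push_cast; ring
    exact_mod_cast h2'
  have hmpos : (0:ℝ) < (m:ℝ)^m := by positivity
  have hpos : ∀ i, 0 < lam i := by
    intro i
    rcases (hnonneg i).lt_or_eq with h | h
    · exact h
    · exfalso
      have : ∏ j, lam j = 0 := Finset.prod_eq_zero (Finset.mem_univ i) h.symm
      rw [hprod] at this
      linarith [hdet]
  -- Jensen equality
  have hmne : (m:ℝ) ≠ 0 := Nat.cast_ne_zero.mpr hm.ne'
  have hsum_w : ∑ _i : Fin m, (1:ℝ)/m = 1 := by
    rw [Finset.sum_const]; simp [Finset.card_univ]; field_simp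
  have hcenter : ∑ i : Fin m, ((1:ℝ)/m) • lam i = (m:ℝ) := by
    rw [← Finset.smul_sum, hsum, smul_eq_mul]; field_simp
  have hlog : Real.log (∑ i : Fin m, ((1:ℝ)/m) • lam i) ≤
      ∑ i : Fin m, ((1:ℝ)/m) • Real.log (lam i) := by
    rw [hcenter]
    have : ∑ i : Fin m, ((1:ℝ)/m) • Real.log (lam i) = (1/m) * Real.log (∏ i, lam i) := by
      rw [Real.log_prod (fun i _ => (hpos i).ne'), Finset.mul_sum]; rfl
    rw [this, hprod]
    have h3 : Real.log ((m:ℝ)^m) ≤ Real.log (‖V.det‖ ^ 2) :=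
      Real.log_le_log hmpos hdet
    rw [Real.log_pow] at h3
    have h4 : Real.log (m:ℝ) = (1/m) * (m * Real.log m) := by field_simp
    rw [h4]
    exact mul_le_mul_of_nonneg_left h3 (by positivity)
  have hall : ∀ j : Fin m, ∀ k : Fin m, lam j = lam k := by
    intro j k
    exact strictConcaveOn_log_Ioi.eq_of_map_sum_eq
      (fun i _ => by positivity) hsum_w (fun i _ => hpos i) hlog
      (Finset.mem_univ j) (Finset.mem_univ k)
  -- G is a scalar multiple of the identity
  have hGscalar : G = ((lam ⟨0, hm⟩ : ℂ)) • (1 : Matrix (Fin m) (Fin m) ℂ) := by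
    have hdiageq : Matrix.diagonal (RCLike.ofReal ∘ lam : Fin m → ℂ)
        = ((lam ⟨0, hm⟩ : ℂ)) • (1 : Matrix (Fin m) (Fin m) ℂ) := by
      rw [Matrix.smul_one_eq_diagonal]
      have heqf : (RCLike.ofReal ∘ lam : Fin m → ℂ) = fun _ => ((lam ⟨0, hm⟩ : ℝ) : ℂ) := by
        funext i
        simp only [Function.comp_apply]
        exact congrArg _ (hall i ⟨0, hm⟩)
      rw [heqf]
    have hU := (Matrix.mem_unitaryGroup_iff).mp (hherm.eigenvectorUnitary).2
    conv_lhs => rw [hherm.spectral_theorem, hdiageq]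
    rw [Unitary.conjStarAlgAut_apply, mul_smul_comm, smul_mul_assoc, mul_one, hU]
  have hoff : ∀ i j, i ≠ j → G i j = 0 := by
    intro i j hij
    rw [hGscalar]
    simp [Matrix.one_apply, hij]
  intro i j
  rcases eq_or_ne i j with rfl | hij
  · rfl
  · have h5 : ∑ t : Fin m, (z i * (starRingEnd ℂ) (z j))^(t:ℕ) = 0 := by
      rw [← Gentry, hoff i j hij]
    set w := z i * (starRingEnd ℂ) (z j) with hw
    have h6 : ∑ t ∈ Finset.range m, w ^ t = 0 := by
      rw [← Fin.sum_univ_eq_sum_range]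
      exact h5
    have h7 : w ^ m = 1 := by
      have := geom_sum_mul w m
      rw [h6, zero_mul] at this
      linear_combination -this
    have h8 : z i ^ m * (starRingEnd ℂ) (z j ^ m) = 1 := by
      rw [map_pow]
      rw [hw, mul_pow] at h7
      exact h7
    have h9 : z j ^ m * (starRingEnd ℂ) (z j ^ m) = 1 := by
      rw [Complex.mul_conj, ← Complex.sq_norm, norm_pow, hz j]
      norm_num
    calc z i ^ m = z i ^ m * (z j ^ m * (starRingEnd ℂ) (z j ^ m)) := by rw [h9, mul_one]
      _ = (z i ^ m * (starRingEnd ℂ) (z j ^ m)) * z j ^ m := by ring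
      _ = z j ^ m := by rw [h8, one_mul]




lemma ms_prod_nonneg (s : Multiset ℝ) (h : ∀ x ∈ s, (0:ℝ) ≤ x) : 0 ≤ s.prod := by
  induction s using Multiset.induction_on with
  | empty => simp
  | cons x s ih =>
    rw [Multiset.prod_cons]
    exact mul_nonneg (h x (Multiset.mem_cons_self x s))
      (ih fun y hy => h y (Multiset.mem_cons_of_mem hy))

lemma ms_pow_card_le_prod (s : Multiset ℝ) (a : ℝ) (ha : 0 ≤ a) (h : ∀ x ∈ s, a ≤ x) :
    a ^ Multiset.card s ≤ s.prod := by
  induction s using Multiset.induction_on with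
  | empty => simp
  | cons x s ih =>
    rw [Multiset.prod_cons, Multiset.card_cons, pow_succ']
    have h1 : a ^ Multiset.card s ≤ s.prod := ih fun y hy => h y (Multiset.mem_cons_of_mem hy)
    have h2 : a ≤ x := h x (Multiset.mem_cons_self x s)
    have h3 : (0:ℝ) ≤ s.prod := ms_prod_nonneg s fun y hy =>
      le_trans ha (h y (Multiset.mem_cons_of_mem hy))
    exact mul_le_mul h2 h1 (pow_nonneg ha _) (le_trans ha h2)

lemma ms_swap (S T : Multiset ℂ) (f : ℂ → ℂ → ℝ) :
    (S.map fun a => (T.map fun b => f a b).prod).prod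
      = (T.map fun b => (S.map fun a => f a b).prod).prod := by
  induction S using Multiset.induction_on with
  | empty => simp
  | cons x s ih =>
    simp only [Multiset.map_cons, Multiset.prod_cons, ih, ← Multiset.prod_map_mul]




lemma prod_erase_sq {m : ℕ} (a : Fin m → Fin m → ℝ) (hsym : ∀ i j, a i j = a j i) :
    ∏ i, ∏ j ∈ Finset.univ.erase i, a i j = (∏ i, ∏ j ∈ Finset.Ioi i, a i j)^2 := by
  have hsplit : ∀ i : Fin m, Finset.univ.erase i = Finset.Ioi i ∪ Finset.Iio i := by
    intro i; ext j
    simp only [Finset.mem_erase, Finset.mem_univ, and_true, Finset.mem_union, Finset.mem_Ioi,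
      Finset.mem_Iio]
    constructor
    · intro h; rcases lt_or_gt_of_ne h with h' | h'
      · right; exact h'
      · left; exact h'
    · rintro (h | h) <;> [exact ne_of_gt h; exact ne_of_lt h]
  have hdisj : ∀ i : Fin m, Disjoint (Finset.Ioi i) (Finset.Iio i) := by
    intro i
    refine Finset.disjoint_left.mpr fun j hj hj' => ?_
    exact absurd (Finset.mem_Ioi.mp hj) (not_lt.mpr (le_of_lt (Finset.mem_Iio.mp hj')))
  calc ∏ i, ∏ j ∈ Finset.univ.erase i, a i j
      = ∏ i, ((∏ j ∈ Finset.Ioi i, a i j) * ∏ j ∈ Finset.Iio i, a i j) := by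
        refine Finset.prod_congr rfl fun i _ => ?_
        rw [hsplit i, Finset.prod_union (hdisj i)]
    _ = (∏ i, ∏ j ∈ Finset.Ioi i, a i j) * (∏ i, ∏ j ∈ Finset.Iio i, a i j) :=
        Finset.prod_mul_distrib
    _ = (∏ i, ∏ j ∈ Finset.Ioi i, a i j)^2 := by
        rw [sq]
        congr 1
        rw [Finset.prod_comm' (t' := (Finset.univ : Finset (Fin m)))
          (s' := fun j => Finset.Ioi j) (by intro x y; simp [Finset.mem_Ioi, Finset.mem_Iio])]
        exact Finset.prod_congr rfl fun i _ => Finset.prod_congr rfl fun j _ => hsym j i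


theorem maximal_polynomials_characterization (n : ℕ) (hn : 2 ≤ n) (p : Polynomial ℂ)
    (hmonic : p.Monic) (hdeg : p.natDegree = n)
    (h0 : p.eval 0 = 0) (h1 : (Polynomial.derivative p).eval 0 ≠ 0)
    (hroots : ∀ z ∈ p.roots, z ≠ 0 → ‖z‖ = 1)
    (heq : sInf {x : ℝ | ∃ ζ : ℂ, (Polynomial.derivative p).eval ζ = 0 ∧
        x = ‖p.eval ζ / (ζ * (Polynomial.derivative p).eval 0)‖} =
      ((n : ℝ) - 1) / n) :
    ∃ c : ℂ, ‖c‖ = 1 ∧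
      p = Polynomial.X * (Polynomial.X ^ (n - 1) - Polynomial.C c) := by
  classical
  set m := n - 1 with hm_def
  have hm : 1 ≤ m := le_tsub_of_add_le_left hn
  have hnm : n = m + 1 := by omega
  set g := p.divX with hg_def
  have hpg : p = X * g := by
    have h := X_mul_divX_add p
    rw [coeff_zero_eq_eval_zero, h0, map_zero, add_zero] at h
    exact h.symm
  have hgmonic : g.Monic := by
    apply Polynomial.Monic.of_mul_monic_left (monic_X)
    rw [← hpg]; exact hmonic
  have hgdeg : g.natDegree = m := by
    have := Polynomial.Monic.natDegree_mul monic_X hgmonic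
    rw [← hpg, hdeg, natDegree_X] at this
    omega
  have hgne : g ≠ 0 := hgmonic.ne_zero
  have hderiv : derivative p = g + X * derivative g := by
    rw [hpg, derivative_mul, derivative_X, one_mul]
  have hg0 : g.eval 0 ≠ 0 := by
    intro h; apply h1; rw [hderiv]; simp [h]
  have hq0eq : (derivative p).eval 0 = g.eval 0 := by rw [hderiv]; simp
  set R := g.roots with hR_def
  have hRcard : Multiset.card R = m := by
    rw [hR_def, ← hgdeg]
    exact (Polynomial.splits_iff_card_roots.mp (IsAlgClosed.splits g))
  have hgprod : g = (R.map fun z => X - C z).prod :=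
    (IsAlgClosed.splits g).eq_prod_roots_of_monic hgmonic
  have hRroot : ∀ z ∈ R, g.eval z = 0 := fun z hz =>
    (Polynomial.isRoot_of_mem_roots hz)
  have hRunit : ∀ z ∈ R, ‖z‖ = 1 := by
    intro z hz
    have hzne : z ≠ 0 := by rintro rfl; exact hg0 (hRroot 0 hz)
    apply hroots z _ hzne
    rw [Polynomial.mem_roots hmonic.ne_zero]
    rw [hpg]
    simp [Polynomial.IsRoot, hRroot z hz]
  have habsg0 : ‖g.eval 0‖ = 1 := by
    conv_lhs => rw [hgprod]
    rw [Polynomial.eval_multiset_prod, Multiset.map_map, norm_ms_prod, Multiset.map_map]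
    apply Multiset.prod_eq_one
    intro x hx
    simp only [Multiset.mem_map, Function.comp_apply] at hx
    obtain ⟨z, hz, rfl⟩ := hx
    simp [hRunit z hz]
  -- derivative
  set q := derivative p with hq_def
  have hqne : q ≠ 0 := fun h => h1 (by rw [h, eval_zero])
  have hqdeg : q.natDegree = m := by
    apply Polynomial.natDegree_eq_of_le_of_coeff_ne_zero
    · rw [hq_def]
      have := Polynomial.natDegree_derivative_le p
      rw [hdeg] at this; omega
    · rw [hq_def, Polynomial.coeff_derivative]
      have : p.coeff (m + 1) = 1 := by
        rw [← hnm, ← hdeg]; exact hmonic.coeff_natDegree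
      rw [this, one_mul]
      exact Nat.cast_add_one_ne_zero m
  have hqlead : q.leadingCoeff = (n : ℂ) := by
    rw [Polynomial.leadingCoeff, hqdeg, hq_def, Polynomial.coeff_derivative]
    have : p.coeff (m + 1) = 1 := by rw [← hnm, ← hdeg]; exact hmonic.coeff_natDegree
    rw [this, one_mul, hnm]
    push_cast; ring
  set T := q.roots with hT_def
  have hTcard : Multiset.card T = m := by
    rw [hT_def, ← hqdeg]
    exact (Polynomial.splits_iff_card_roots.mp (IsAlgClosed.splits q))
  have hqprod : q = C (n : ℂ) * (T.map fun z => X - C z).prod := by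
    rw [← hqlead]
    exact (IsAlgClosed.splits q).eq_prod_roots
  -- lower bound at critical points
  have hb : ∀ ζ ∈ T, ((m:ℝ)/(m+1)) ≤ ‖g.eval ζ‖ := by
    intro ζ hζ
    have hroot : q.eval ζ = 0 := Polynomial.isRoot_of_mem_roots hζ
    have hζne : ζ ≠ 0 := by rintro rfl; exact h1 hroot
    have hBdd : BddBelow {x : ℝ | ∃ ζ : ℂ, q.eval ζ = 0 ∧
        x = ‖p.eval ζ / (ζ * q.eval 0)‖} := by
      refine ⟨0, ?_⟩
      rintro x ⟨ξ, -, rfl⟩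
      exact norm_nonneg _
    have hmem : ‖p.eval ζ / (ζ * q.eval 0)‖ ∈ {x : ℝ | ∃ ζ : ℂ, q.eval ζ = 0 ∧
        x = ‖p.eval ζ / (ζ * q.eval 0)‖} := ⟨ζ, hroot, rfl⟩
    have hle := csInf_le hBdd hmem
    rw [heq] at hle
    have hval : ‖p.eval ζ / (ζ * q.eval 0)‖ = ‖g.eval ζ‖ := by
      rw [hq0eq]
      have : p.eval ζ = ζ * g.eval ζ := by rw [hpg]; simp
      rw [this, mul_div_mul_left _ _ hζne, norm_div, habsg0, div_one]
    rw [hval] at hle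
    calc ((m:ℝ)/(m+1)) = ((n:ℝ) - 1)/n := by rw [hnm]; push_cast; ring_nf
      _ ≤ _ := hle
  -- product lower bound
  have hprodT : ((m:ℝ)/(m+1))^m ≤ (T.map fun ζ => ‖g.eval ζ‖).prod := by
    have := ms_pow_card_le_prod (T.map fun ζ => ‖g.eval ζ‖) ((m:ℝ)/(m+1))
      (by positivity) ?_
    · rwa [Multiset.card_map, hTcard] at this
    · intro x hx
      obtain ⟨ζ, hζ, rfl⟩ := Multiset.mem_map.mp hx
      exact hb ζ hζ
  -- the identity
  have hevalg : ∀ w : ℂ, ‖g.eval w‖ = (R.map fun z => ‖w - z‖).prod := by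
    intro w
    conv_lhs => rw [hgprod]
    rw [Polynomial.eval_multiset_prod, Multiset.map_map, norm_ms_prod, Multiset.map_map]
    refine congrArg Multiset.prod (Multiset.map_congr (α := ℂ) (β := ℝ) rfl ?_)
    intro z _
    simp
  have hevalq : ∀ w : ℂ, ‖q.eval w‖
      = (n:ℝ) * (T.map fun ζ => ‖w - ζ‖).prod := by
    intro w
    conv_lhs => rw [hqprod]
    rw [Polynomial.eval_mul, Polynomial.eval_C, norm_mul, Complex.norm_natCast,
      Polynomial.eval_multiset_prod, Multiset.map_map, norm_ms_prod, Multiset.map_map]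
    refine congrArg (fun t : Multiset ℝ => (n:ℝ) * t.prod) (Multiset.map_congr rfl ?_)
    intro ζ _
    simp
  have hgz : ∀ z ∈ R, ‖(derivative g).eval z‖ = ‖q.eval z‖ := by
    intro z hz
    have : q.eval z = z * (derivative g).eval z := by
      rw [hderiv]; simp [hRroot z hz]
    rw [this, norm_mul, hRunit z hz, one_mul]
  have hkey : (T.map fun ζ => ‖g.eval ζ‖).prod * (n:ℝ)^m
      = (R.map fun z => ‖(derivative g).eval z‖).prod := by
    have hA : (T.map fun ζ => ‖g.eval ζ‖).prod
        = (R.map fun z => (T.map fun ζ => ‖ζ - z‖).prod).prod := by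
      rw [Multiset.map_congr rfl fun ζ _ => hevalg ζ]
      exact ms_swap T R (fun a b => ‖a - b‖)
    have hB : (R.map fun z => ‖(derivative g).eval z‖)
        = R.map (fun z => (n:ℝ) * (T.map fun ζ => ‖ζ - z‖).prod) := by
      apply Multiset.map_congr rfl
      intro z hz
      rw [hgz z hz, hevalq z]
      refine congrArg (fun t : Multiset ℝ => (n:ℝ) * t.prod) (Multiset.map_congr rfl ?_)
      intro ζ _
      exact norm_sub_rev _ _
    rw [hA, hB]
    rw [show (fun z => (n:ℝ) * (T.map fun ζ => ‖ζ - z‖).prod)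
        = (fun z => ((fun _ : ℂ => (n:ℝ)) z) * ((fun z => (T.map fun ζ =>
          ‖ζ - z‖).prod) z)) from rfl, Multiset.prod_map_mul]
    rw [Multiset.map_const', Multiset.prod_replicate, hRcard, mul_comm]
  have hBineq : ((m:ℝ))^m ≤ (R.map fun z => ‖(derivative g).eval z‖).prod := by
    rw [← hkey]
    calc ((m:ℝ))^m = ((m:ℝ)/(m+1))^m * (n:ℝ)^m := by
          rw [div_pow, hnm]; push_cast; field_simp
      _ ≤ _ := by
          apply mul_le_mul_of_nonneg_right hprodT (by positivity)
  have hmmpos : (0:ℝ) < (m:ℝ)^m := by positivity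
  have hgzne : ∀ z ∈ R, (derivative g).eval z ≠ 0 := by
    intro z hz hzero
    have h0' : (R.map fun z => ‖(derivative g).eval z‖).prod = 0 :=
      Multiset.prod_eq_zero (Multiset.mem_map.mpr ⟨z, hz, by rw [hzero, norm_zero]⟩)
    rw [h0'] at hBineq
    linarith
  have hnodup : R.Nodup := by
    rw [Multiset.nodup_iff_count_le_one]
    intro z
    by_contra hc
    push_neg at hc
    have hzR : z ∈ R := by rw [← Multiset.count_pos]; omega
    have hdvd : (X - C z)^2 ∣ g := by
      have h2 : 2 ≤ rootMultiplicity z g := by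
        have := Polynomial.count_roots (a := z) g
        rw [← hR_def] at this
        omega
      exact dvd_trans (pow_dvd_pow _ h2) (Polynomial.pow_rootMultiplicity_dvd g z)
    obtain ⟨h, hh⟩ := hdvd
    apply hgzne z hzR
    rw [hh, derivative_mul, derivative_pow]
    simp
  set s : Finset ℂ := R.toFinset with hs_def
  have hsval : s.val = R := by
    rw [hs_def, Multiset.toFinset_val, Multiset.dedup_eq_self.mpr hnodup]
  have hscard : s.card = m := by rw [Finset.card_def, hsval, hRcard]
  have hmemsR : ∀ x, x ∈ s ↔ x ∈ R := fun x => Multiset.mem_toFinset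
  have hgnodal : g = Lagrange.nodal s id := by
    rw [Lagrange.nodal_eq, hgprod, Finset.prod_eq_multiset_prod, hsval]
    simp only [id_eq]
  have hgderiv_eval : ∀ x ∈ s, (derivative g).eval x = ∏ y ∈ s.erase x, (x - y) := by
    intro x hx
    rw [hgnodal]
    have h := Lagrange.eval_nodal_derivative_eval_node_eq (s := s) (v := id) hx
    simp only [id_eq] at h
    rw [h, Lagrange.eval_nodal]
    simp
  have hBfin : (R.map fun z => ‖(derivative g).eval z‖).prod
      = ∏ x ∈ s, ∏ y ∈ s.erase x, ‖x - y‖ := by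
    rw [← hsval, ← Finset.prod_eq_multiset_prod]
    refine Finset.prod_congr rfl fun x hx => ?_
    rw [hgderiv_eval x hx, norm_prod]
  -- index with Fin m
  have e : ↥s ≃ Fin m := Fintype.equivFinOfCardEq (by rw [Fintype.card_coe]; exact hscard)
  set z : Fin m → ℂ := fun i => ((e.symm i : ↥s) : ℂ) with hz_def
  have hzmem : ∀ i, z i ∈ s := fun i => (e.symm i).2
  have hzinj : Function.Injective z := fun i j hij =>
    e.symm.injective (Subtype.coe_injective hij)
  set w : ℂ → Fin m := fun y => if hy : y ∈ s then e ⟨y, hy⟩ else ⟨0, hm⟩ with hw_def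
  have hwz : ∀ i, w (z i) = i := by
    intro i
    rw [hw_def]
    simp only
    rw [dif_pos (hzmem i)]
    have hsub : (⟨z i, hzmem i⟩ : ↥s) = e.symm i := Subtype.ext rfl
    rw [hsub, Equiv.apply_symm_apply]
  have hzw : ∀ y ∈ s, z (w y) = y := by
    intro y hy
    rw [hw_def]
    simp only
    rw [dif_pos hy, hz_def]
    simp only
    rw [Equiv.symm_apply_apply]
  have houter : ∀ F : ℂ → ℝ, ∏ x ∈ s, F x = ∏ i : Fin m, F (z i) := by
    intro F
    exact Finset.prod_nbij' w z (fun a _ => Finset.mem_univ _) (fun i _ => hzmem i)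
      (fun a ha => hzw a ha) (fun i _ => hwz i)
      (fun a ha => by rw [hzw a ha])
  have hinner : ∀ i : Fin m, ∏ y ∈ s.erase (z i), ‖z i - y‖
      = ∏ j ∈ Finset.univ.erase i, ‖z i - z j‖ := by
    intro i
    refine Finset.prod_nbij' w z ?_ ?_ ?_ ?_ ?_
    · intro a ha
      obtain ⟨hane, has⟩ := Finset.mem_erase.mp ha
      refine Finset.mem_erase.mpr ⟨?_, Finset.mem_univ _⟩
      intro hcon
      exact hane (by rw [← hzw a has, hcon])
    · intro j hj
      obtain ⟨hjne, -⟩ := Finset.mem_erase.mp hj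
      exact Finset.mem_erase.mpr ⟨fun hcon => hjne (hzinj hcon), hzmem j⟩
    · intro a ha
      exact hzw a (Finset.mem_erase.mp ha).2
    · intro j _
      exact hwz j
    · intro a ha
      rw [hzw a (Finset.mem_erase.mp ha).2]
  have hPfin : (m:ℝ)^m ≤ ∏ i : Fin m, ∏ j ∈ Finset.univ.erase i, ‖z i - z j‖ := by
    calc (m:ℝ)^m ≤ (R.map fun z => ‖(derivative g).eval z‖).prod := hBineq
      _ = ∏ x ∈ s, ∏ y ∈ s.erase x, ‖x - y‖ := hBfin
      _ = ∏ i : Fin m, ∏ y ∈ s.erase (z i), ‖z i - y‖ :=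
          houter fun x => ∏ y ∈ s.erase x, ‖x - y‖
      _ = ∏ i : Fin m, ∏ j ∈ Finset.univ.erase i, ‖z i - z j‖ :=
          Finset.prod_congr rfl fun i _ => hinner i
  have hdet2 : ((m:ℝ))^m ≤ ‖(Matrix.vandermonde z).det‖^2 := by
    have hD : ‖(Matrix.vandermonde z).det‖
        = ∏ i, ∏ j ∈ Finset.Ioi i, ‖z i - z j‖ := by
      rw [Matrix.det_vandermonde, norm_prod]
      refine Finset.prod_congr rfl fun i _ => ?_
      rw [norm_prod]
      exact Finset.prod_congr rfl fun j _ => norm_sub_rev _ _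
    rw [hD, ← prod_erase_sq (fun i j => ‖z i - z j‖)
      (fun i j => norm_sub_rev _ _)]
    exact hPfin
  have hzm := gram_step (by omega : 0 < m) z
    (fun i => hRunit (z i) ((hmemsR (z i)).mp (hzmem i))) hdet2
  set i0 : Fin m := ⟨0, by omega⟩ with hi0_def
  refine ⟨z i0 ^ m, ?_, ?_⟩
  · rw [norm_pow, hRunit (z i0) ((hmemsR (z i0)).mp (hzmem i0)), one_pow]
  · have hfz : ∀ x ∈ s, (X^m - C (z i0 ^ m) : ℂ[X]).eval x = 0 := by
      intro x hx
      have hxz : z (w x) = x := hzw x hx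
      rw [← hxz]
      simp only [eval_sub, eval_pow, eval_X, eval_C]
      rw [hzm (w x) i0, sub_self]
    have hfmonic : (X^m - C (z i0 ^ m) : ℂ[X]).Monic := monic_X_pow_sub_C _ (by omega)
    have hsub : (X^m - C (z i0 ^ m) : ℂ[X]) - g = 0 := by
      rcases eq_or_ne ((X^m - C (z i0 ^ m) : ℂ[X]) - g) 0 with h | h
      · exact h
      · apply Polynomial.eq_zero_of_natDegree_lt_card_of_eval_eq_zero' _ s
        · intro x hx
          rw [eval_sub, hfz x hx, hRroot x ((hmemsR x).mp hx), sub_zero]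
        · rw [hscard]
          rw [Polynomial.natDegree_lt_iff_degree_lt h]
          have hdeg_eq : (X^m - C (z i0 ^ m) : ℂ[X]).degree = g.degree := by
            rw [Polynomial.degree_X_pow_sub_C (by omega) _, Polynomial.degree_eq_natDegree hgne,
              hgdeg]
          have hlt := Polynomial.degree_sub_lt hdeg_eq hfmonic.ne_zero
            (by rw [hfmonic.leadingCoeff, hgmonic.leadingCoeff])
          rwa [Polynomial.degree_X_pow_sub_C (by omega) _] at hlt
    have hgeq : g = X^m - C (z i0 ^ m) := (sub_eq_zero.mp hsub).symm
    rw [hpg, hgeq]
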